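/- Let A = −diag(λ₁, …, λ_n) with λ_i > 0 for all i. For every symmetric positive definite P ∈ ℝ^{n×n} such that Q := −(P A + Aᵀ P) is positive definite, one has Γ(P) := 4·λ_max(P)·‖Q^{−1/2}P‖² / (λ_min(Q)·λ_min(P)) ≥ 1/(min_i λ_i)². -/

import Mathlib

open Filter Matrix

/-- Euclidean space `ℝ^n`. -/
abbrev E (n : ℕ) := EuclideanSpace ℝ (Fin n)

/-- Smallest eigenvalue of a (Hermitian) real matrix. -/
noncomputable def lamMin {n : ℕ} (M : Matrix (Fin n) (Fin n) ℝ) : ℝ :=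
  if h : M.IsHermitian then ⨅ i, h.eigenvalues i else 0

/-- Largest eigenvalue of a (Hermitian) real matrix. -/
noncomputable def lamMax {n : ℕ} (M : Matrix (Fin n) (Fin n) ℝ) : ℝ :=
  if h : M.IsHermitian then ⨆ i, h.eigenvalues i else 0

open scoped Classical in
/-- The positive semidefinite square root `M^{1/2}` of a positive semidefinite matrix. -/
noncomputable def matSqrt {n : ℕ} (M : Matrix (Fin n) (Fin n) ℝ) : Matrix (Fin n) (Fin n) ℝ :=
  if h : M.PosSemidef then
    (h.1.eigenvectorUnitary : Matrix (Fin n) (Fin n) ℝ) *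
      diagonal ((↑) ∘ (√·) ∘ h.1.eigenvalues) *
      (star h.1.eigenvectorUnitary : Matrix (Fin n) (Fin n) ℝ)
  else 0

/-- `M^{-1/2} := (M^{1/2})⁻¹`. -/
noncomputable def invSqrt {n : ℕ} (M : Matrix (Fin n) (Fin n) ℝ) : Matrix (Fin n) (Fin n) ℝ :=
  (matSqrt M)⁻¹

/-- Operator norm of a matrix induced by the Euclidean norms. -/
noncomputable def opNorm {m n : ℕ} (M : Matrix (Fin m) (Fin n) ℝ) : ℝ :=
  ‖LinearMap.toContinuousLinearMap (Matrix.toEuclideanLin M)‖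

/-- Matrix-vector multiplication as a map between Euclidean spaces. -/
def mv {m n : ℕ} (M : Matrix (Fin m) (Fin n) ℝ) (v : E n) : E m := WithLp.toLp 2 (M.mulVec v)

/- ### Auxiliary lemmas -/

lemma aux_shift_lower {n : ℕ} {M : Matrix (Fin n) (Fin n) ℝ} (hM : M.IsHermitian) (c : ℝ)
    (hc : ∀ i, c ≤ hM.eigenvalues i) (x : Fin n → ℝ) :
    c * (x ⬝ᵥ x) ≤ x ⬝ᵥ M *ᵥ x := by
  have hps : (M - c • 1).PosSemidef := by
    have key : M - c • 1 =
        (hM.eigenvectorUnitary : Matrix (Fin n) (Fin n) ℝ) *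
          Matrix.diagonal (fun i => hM.eigenvalues i - c) *
          (hM.eigenvectorUnitary : Matrix (Fin n) (Fin n) ℝ)ᴴ := by
      have hsp := hM.spectral_theorem
      rw [Unitary.conjStarAlgAut_apply] at hsp
      have hU : (hM.eigenvectorUnitary : Matrix (Fin n) (Fin n) ℝ) *
          (star (hM.eigenvectorUnitary : Matrix (Fin n) (Fin n) ℝ)) = 1 :=
        (Matrix.mem_unitaryGroup_iff).mp hM.eigenvectorUnitary.2
      have hdiag : Matrix.diagonal (fun i => hM.eigenvalues i - c) =
          Matrix.diagonal (RCLike.ofReal ∘ hM.eigenvalues) - c • (1 : Matrix (Fin n) (Fin n) ℝ) := by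
        rw [Matrix.smul_one_eq_diagonal, ← Matrix.diagonal_sub]
        rfl
      rw [hdiag, Matrix.mul_sub, Matrix.sub_mul, ← Matrix.star_eq_conjTranspose, ← hsp]
      congr 1
      rw [Matrix.mul_smul, Matrix.mul_one, Matrix.smul_mul]
      congr 1
      exact hU.symm
    rw [key]
    exact (Matrix.posSemidef_diagonal_iff.mpr
      (fun i => sub_nonneg.mpr (hc i))).mul_mul_conjTranspose_same _
  have h := hps.dotProduct_mulVec_nonneg x
  simp only [RCLike.re_to_real, star_trivial] at h
  rw [Matrix.sub_mulVec, Matrix.smul_mulVec, Matrix.one_mulVec, dotProduct_sub,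
    dotProduct_smul] at h
  simp only [smul_eq_mul] at h
  linarith

lemma aux_shift_upper {n : ℕ} {M : Matrix (Fin n) (Fin n) ℝ} (hM : M.IsHermitian) (c : ℝ)
    (hc : ∀ i, hM.eigenvalues i ≤ c) (x : Fin n → ℝ) :
    x ⬝ᵥ M *ᵥ x ≤ c * (x ⬝ᵥ x) := by
  have hps : (c • 1 - M).PosSemidef := by
    have key : c • 1 - M =
        (hM.eigenvectorUnitary : Matrix (Fin n) (Fin n) ℝ) *
          Matrix.diagonal (fun i => c - hM.eigenvalues i) *
          (hM.eigenvectorUnitary : Matrix (Fin n) (Fin n) ℝ)ᴴ := by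
      have hsp := hM.spectral_theorem
      rw [Unitary.conjStarAlgAut_apply] at hsp
      have hU : (hM.eigenvectorUnitary : Matrix (Fin n) (Fin n) ℝ) *
          (star (hM.eigenvectorUnitary : Matrix (Fin n) (Fin n) ℝ)) = 1 :=
        (Matrix.mem_unitaryGroup_iff).mp hM.eigenvectorUnitary.2
      have hdiag : Matrix.diagonal (fun i => c - hM.eigenvalues i) =
          c • (1 : Matrix (Fin n) (Fin n) ℝ) - Matrix.diagonal (RCLike.ofReal ∘ hM.eigenvalues) := by
        rw [Matrix.smul_one_eq_diagonal, ← Matrix.diagonal_sub]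
        rfl
      rw [hdiag, Matrix.mul_sub, Matrix.sub_mul, ← Matrix.star_eq_conjTranspose, ← hsp]
      congr 1
      rw [Matrix.mul_smul, Matrix.mul_one, Matrix.smul_mul]
      congr 1
      exact hU.symm
    rw [key]
    exact (Matrix.posSemidef_diagonal_iff.mpr
      (fun i => sub_nonneg.mpr (hc i))).mul_mul_conjTranspose_same _
  have h := hps.dotProduct_mulVec_nonneg x
  simp only [RCLike.re_to_real, star_trivial] at h
  rw [Matrix.sub_mulVec, Matrix.smul_mulVec, Matrix.one_mulVec, dotProduct_sub,
    dotProduct_smul] at h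
  simp only [smul_eq_mul] at h
  linarith

lemma aux_norm_sq {n : ℕ} (v : Fin n → ℝ) :
    ‖(WithLp.equiv 2 (Fin n → ℝ)).symm v‖ ^ 2 = v ⬝ᵥ v := by
  rw [← real_inner_self_eq_norm_sq]
  simp only [WithLp.equiv_symm_apply, PiLp.inner_apply, PiLp.toLp_apply, dotProduct,
    RCLike.inner_apply, conj_trivial, mul_comm]

lemma aux_dot_le {n : ℕ} (v w : Fin n → ℝ) :
    v ⬝ᵥ w ≤ ‖(WithLp.equiv 2 (Fin n → ℝ)).symm v‖ * ‖(WithLp.equiv 2 (Fin n → ℝ)).symm w‖ := by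
  have h := real_inner_le_norm ((WithLp.equiv 2 (Fin n → ℝ)).symm v)
    ((WithLp.equiv 2 (Fin n → ℝ)).symm w)
  have : inner ℝ ((WithLp.equiv 2 (Fin n → ℝ)).symm v) ((WithLp.equiv 2 (Fin n → ℝ)).symm w)
      = v ⬝ᵥ w := by
    simp [PiLp.inner_apply, dotProduct, WithLp.equiv_symm_apply, mul_comm]
  rwa [this] at h

lemma aux_opNorm_bound {n : ℕ} (M : Matrix (Fin n) (Fin n) ℝ) (x : Fin n → ℝ) :
    ‖(WithLp.equiv 2 (Fin n → ℝ)).symm (M *ᵥ x)‖ ≤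
      opNorm M * ‖(WithLp.equiv 2 (Fin n → ℝ)).symm x‖ := by
  have h := (LinearMap.toContinuousLinearMap (Matrix.toEuclideanLin M)).le_opNorm
    ((WithLp.equiv 2 (Fin n → ℝ)).symm x)
  rw [LinearMap.coe_toContinuousLinearMap'] at h
  rw [WithLp.equiv_symm_apply, Matrix.toEuclideanLin_apply_piLp_toLp] at h
  exact h

lemma aux_symm_dot {n : ℕ} {S : Matrix (Fin n) (Fin n) ℝ} (hS : Sᵀ = S) (v w : Fin n → ℝ) :
    v ⬝ᵥ (S *ᵥ w) = (S *ᵥ v) ⬝ᵥ w := by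
  rw [Matrix.dotProduct_mulVec, ← hS, Matrix.vecMul_transpose, hS]

lemma aux_ciInf_le {n : ℕ} [NeZero n] (f : Fin n → ℝ) (j : Fin n) : (⨅ i, f i) ≤ f j :=
  ciInf_le (Finite.bddBelow_range f) j

lemma aux_le_ciSup {n : ℕ} [NeZero n] (f : Fin n → ℝ) (j : Fin n) : f j ≤ ⨆ i, f i :=
  le_ciSup (Finite.bddAbove_range f) j

lemma aux_ciInf_pos {n : ℕ} [NeZero n] {f : Fin n → ℝ} (hf : ∀ i, 0 < f i) : 0 < ⨅ i, f i := by
  obtain ⟨j, hj⟩ := Finite.exists_min f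
  exact lt_of_lt_of_le (hf j) (le_ciInf hj)

theorem stmt14 {n : ℕ} [NeZero n] (lam : Fin n → ℝ) (hlam : ∀ i, 0 < lam i)
    (A : Matrix (Fin n) (Fin n) ℝ) (hA : A = -Matrix.diagonal lam)
    (P Q : Matrix (Fin n) (Fin n) ℝ) (hP : P.PosDef)
    (hQdef : Q = -(P * A + Aᵀ * P)) (hQ : Q.PosDef) :
    4 * lamMax P * (opNorm (invSqrt Q * P)) ^ 2 / (lamMin Q * lamMin P) ≥
      1 / (⨅ i, lam i) ^ 2 := by
  classical
  obtain ⟨j, hj⟩ := Finite.exists_min lam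
  have hm : (⨅ i, lam i) = lam j := le_antisymm (aux_ciInf_le lam j) (le_ciInf hj)
  set x : Fin n → ℝ := Pi.single j 1 with hx
  -- basic quadratic form values at x
  have hxx : x ⬝ᵥ x = 1 := by simp [hx, single_dotProduct]
  have hform : ∀ (M : Matrix (Fin n) (Fin n) ℝ), x ⬝ᵥ M *ᵥ x = M j j := by
    intro M
    simp [hx, Matrix.mulVec_single, single_dotProduct]
  -- Q = P*D + D*P
  have hQeq : Q = P * Matrix.diagonal lam + Matrix.diagonal lam * P := by
    rw [hQdef, hA]
    simp only [Matrix.transpose_neg, Matrix.diagonal_transpose, Matrix.mul_neg, Matrix.neg_mul,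
      neg_add, neg_neg]
  have hQjj : Q j j = 2 * lam j * P j j := by
    rw [hQeq]
    simp [Matrix.add_apply, Matrix.mul_diagonal, Matrix.diagonal_mul]
    ring
  -- positivity of P j j
  have hPjj : 0 < P j j := by
    have h := hP.dotProduct_mulVec_pos (x := x) (by
      intro h0
      have := congrFun h0 j
      simp [hx] at this)
    simp only [RCLike.re_to_real, star_trivial] at h
    rwa [hform P] at h
  have hlj : 0 < lam j := hlam j
  -- eigenvalue quantities
  have hPH : P.IsHermitian := hP.1
  have hQH : Q.IsHermitian := hQ.1
  have hlamMinQ : lamMin Q = ⨅ i, hQH.eigenvalues i := by rw [lamMin, dif_pos hQH]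
  have hlamMinP : lamMin P = ⨅ i, hPH.eigenvalues i := by rw [lamMin, dif_pos hPH]
  have hlamMaxP : lamMax P = ⨆ i, hPH.eigenvalues i := by rw [lamMax, dif_pos hPH]
  have hQminpos : 0 < lamMin Q := by
    rw [hlamMinQ]; exact aux_ciInf_pos (fun i => hQ.eigenvalues_pos i)
  have hPminpos : 0 < lamMin P := by
    rw [hlamMinP]; exact aux_ciInf_pos (fun i => hP.eigenvalues_pos i)
  -- lamMin Q ≤ Q j j
  have hQle : lamMin Q ≤ 2 * lam j * P j j := by
    have h := aux_shift_lower hQH (lamMin Q)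
      (fun i => by rw [hlamMinQ]; exact aux_ciInf_le _ i) x
    rw [hxx, mul_one, hform Q, hQjj] at h
    exact h
  -- P j j ≤ lamMax P and lamMin P ≤ lamMax P
  have hPle : P j j ≤ lamMax P := by
    have h := aux_shift_upper hPH (lamMax P)
      (fun i => by rw [hlamMaxP]; exact aux_le_ciSup _ i) x
    rw [hxx, mul_one, hform P] at h
    exact h
  have hPminle : lamMin P ≤ lamMax P := by
    have h := aux_shift_lower hPH (lamMin P)
      (fun i => by rw [hlamMinP]; exact aux_ciInf_le _ i) x
    rw [hxx, mul_one, hform P] at h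
    exact le_trans h hPle
  have hPmaxpos : 0 < lamMax P := lt_of_lt_of_le hPminpos hPminle
  -- square root of Q
  have hQps : Q.PosSemidef := hQ.posSemidef
  have hSsq : matSqrt Q * matSqrt Q = Q := by
    rw [matSqrt, dif_pos hQps]
    have hU : star (hQps.1.eigenvectorUnitary : Matrix (Fin n) (Fin n) ℝ) *
        (hQps.1.eigenvectorUnitary : Matrix (Fin n) (Fin n) ℝ) = 1 :=
      (Matrix.mem_unitaryGroup_iff').mp hQps.1.eigenvectorUnitary.2
    have hsp := hQps.1.spectral_theorem
    rw [Unitary.conjStarAlgAut_apply] at hsp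
    conv_rhs => rw [hsp]
    simp only [Matrix.mul_assoc]
    rw [← Matrix.mul_assoc (star _) (hQps.1.eigenvectorUnitary : Matrix (Fin n) (Fin n) ℝ), hU,
      Matrix.one_mul, ← Matrix.mul_assoc (diagonal _) (diagonal _), diagonal_mul_diagonal]
    congr 3
    funext i
    simp only [Function.comp_apply]
    exact Real.mul_self_sqrt (hQ.eigenvalues_pos i).le
  have hSsym : (matSqrt Q)ᵀ = matSqrt Q := by
    rw [matSqrt, dif_pos hQps]
    simp [Matrix.star_eq_conjTranspose, Matrix.transpose_mul, Matrix.mul_assoc]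
  have hdetS : IsUnit (matSqrt Q).det := by
    have hdQ : 0 < Q.det := hQ.det_pos
    rw [← hSsq, Matrix.det_mul] at hdQ
    rw [isUnit_iff_ne_zero]
    intro h0
    rw [h0, mul_zero] at hdQ
    exact lt_irrefl 0 hdQ
  have hSinv : matSqrt Q * (matSqrt Q)⁻¹ = 1 := Matrix.mul_nonsing_inv _ hdetS
  -- the operator norm lower bound
  set N : ℝ := opNorm (invSqrt Q * P) with hN
  have hNnonneg : 0 ≤ N := by
    rw [hN]; exact norm_nonneg _
  set u : Fin n → ℝ := matSqrt Q *ᵥ x with hu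
  set w : Fin n → ℝ := (invSqrt Q * P) *ᵥ x with hw
  have hkey : P j j = u ⬝ᵥ w := by
    have hfac : matSqrt Q *ᵥ w = P *ᵥ x := by
      rw [hw, Matrix.mulVec_mulVec, ← Matrix.mul_assoc, invSqrt, hSinv, Matrix.one_mul]
    calc P j j = x ⬝ᵥ P *ᵥ x := (hform P).symm
      _ = x ⬝ᵥ (matSqrt Q *ᵥ w) := by rw [hfac]
      _ = (matSqrt Q *ᵥ x) ⬝ᵥ w := aux_symm_dot hSsym x w
      _ = u ⬝ᵥ w := by rw [hu]
  have huu : u ⬝ᵥ u = 2 * lam j * P j j := by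
    calc u ⬝ᵥ u = u ⬝ᵥ (matSqrt Q *ᵥ x) := by rw [hu]
      _ = (matSqrt Q *ᵥ u) ⬝ᵥ x := aux_symm_dot hSsym u x
      _ = (Q *ᵥ x) ⬝ᵥ x := by rw [hu, Matrix.mulVec_mulVec, hSsq]
      _ = x ⬝ᵥ (Q *ᵥ x) := dotProduct_comm _ _
      _ = Q j j := hform Q
      _ = 2 * lam j * P j j := hQjj
  have hxnorm : ‖(WithLp.equiv 2 (Fin n → ℝ)).symm x‖ = 1 := by
    have := aux_norm_sq x
    rw [hxx] at this
    nlinarith [norm_nonneg ((WithLp.equiv 2 (Fin n → ℝ)).symm x)]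
  have hwnorm : ‖(WithLp.equiv 2 (Fin n → ℝ)).symm w‖ ≤ N := by
    have h := aux_opNorm_bound (invSqrt Q * P) x
    rw [hxnorm, mul_one] at h
    exact h
  have hCS : P j j ≤ ‖(WithLp.equiv 2 (Fin n → ℝ)).symm u‖ * ‖(WithLp.equiv 2 (Fin n → ℝ)).symm w‖ := by
    rw [hkey]; exact aux_dot_le u w
  have hunorm : ‖(WithLp.equiv 2 (Fin n → ℝ)).symm u‖ ^ 2 = 2 * lam j * P j j := by
    rw [aux_norm_sq, huu]
  have hNsq : P j j / (2 * lam j) ≤ N ^ 2 := by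
    have hsq : P j j ^ 2 ≤ (2 * lam j * P j j) * N ^ 2 := by
      have h1 : P j j ≤ ‖(WithLp.equiv 2 (Fin n → ℝ)).symm u‖ * N := by
        refine le_trans hCS ?_
        exact mul_le_mul_of_nonneg_left hwnorm (norm_nonneg _)
      have h2 : P j j ^ 2 ≤ (‖(WithLp.equiv 2 (Fin n → ℝ)).symm u‖ * N) ^ 2 := by
        apply sq_le_sq' _ h1
        nlinarith [hPjj, mul_nonneg (norm_nonneg ((WithLp.equiv 2 (Fin n → ℝ)).symm u)) hNnonneg]
      calc P j j ^ 2 ≤ (‖(WithLp.equiv 2 (Fin n → ℝ)).symm u‖ * N) ^ 2 := h2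
        _ = ‖(WithLp.equiv 2 (Fin n → ℝ)).symm u‖ ^ 2 * N ^ 2 := by ring
        _ = (2 * lam j * P j j) * N ^ 2 := by rw [hunorm]
    rw [div_le_iff₀ (by positivity)]
    nlinarith [hPjj, hlj]
  -- final arithmetic
  rw [hm, ge_iff_le, div_le_div_iff₀ (by positivity) (mul_pos hQminpos hPminpos)]
  calc 1 * (lamMin Q * lamMin P) = lamMin Q * lamMin P := one_mul _
    _ ≤ (2 * lam j * P j j) * lamMax P :=
        mul_le_mul hQle hPminle hPminpos.le (by positivity)
    _ = 4 * lamMax P * (P j j / (2 * lam j)) * lam j ^ 2 := by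
        field_simp; ring
    _ ≤ 4 * lamMax P * N ^ 2 * lam j ^ 2 := by
        apply mul_le_mul_of_nonneg_right _ (by positivity)
        exact mul_le_mul_of_nonneg_left hNsq (by positivity)
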